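/- (Sublevel set estimate; Christ.) Let N be a positive integer and let f ∈ C^N[a,b] be real-valued with f^{(N)}(x) ≥ μ > 0 for all x ∈ [a,b]. Then there is a constant A_N depending only on N such that for every γ > 0, the Lebesgue measure of the set {x ∈ [a,b] : |f(x)| ≤ γ} is at most A_N (γ/μ)^{1/N}. -/

import Mathlib

open MeasureTheory Set Polynomial Finset



-- gap to all-pairs
lemma chr_pairs {n : ℕ} {δ : ℝ} (hδ : 0 < δ) (x : Fin (n+1) → ℝ)
    (hx : ∀ i : Fin n, x i.castSucc + δ ≤ x i.succ) :
    StrictMono x ∧ ∀ i j : Fin (n+1), i < j → x i + δ ≤ x j := by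
  have mono : Monotone x := Fin.monotone_iff_le_succ.2 (fun i => by linarith [hx i])
  refine ⟨Fin.strictMono_iff_lt_succ.2 fun i => by linarith [hx i], ?_⟩
  intro i j hij
  have hi : (i : ℕ) < n := lt_of_lt_of_le hij (Nat.lt_succ_iff.mp j.isLt)
  set i' : Fin n := ⟨i, hi⟩ with hi'
  have h1 : x i'.castSucc + δ ≤ x i'.succ := hx i'
  have hcast : i'.castSucc = i := by ext; simp [hi']
  have h2 : x i'.succ ≤ x j := mono (by
    show i'.succ ≤ j
    rw [Fin.le_def]
    simpa [hi'] using hij)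
  rw [hcast] at h1; linarith

-- greedy point selection
lemma chr_select (n : ℕ) : ∀ (E : Set ℝ) (a b : ℝ), IsClosed E → E ⊆ Icc a b →
    ∀ δ : ℝ, 0 < δ → (n : ℝ) * δ < (volume E).toReal →
    ∃ x : Fin (n+1) → ℝ, (∀ i, x i ∈ E) ∧ ∀ i : Fin n, x i.castSucc + δ ≤ x i.succ := by
  induction n with
  | zero =>
    intro E a b hE hEs δ hδ hm
    have hne : E.Nonempty := by
      rcases E.eq_empty_or_nonempty with h | h
      · simp [h] at hm
      · exact h
    have hbdd : BddBelow E := ⟨a, fun y hy => (hEs hy).1⟩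
    exact ⟨fun _ => sInf E, fun _ => hE.csInf_mem hne hbdd, fun i => i.elim0⟩
  | succ n IH =>
    intro E a b hE hEs δ hδ hm
    have hne : E.Nonempty := by
      rcases E.eq_empty_or_nonempty with h | h
      · simp [h] at hm; nlinarith
      · exact h
    have hbdd : BddBelow E := ⟨a, fun y hy => (hEs hy).1⟩
    set c := sInf E with hc
    have hcE : c ∈ E := hE.csInf_mem hne hbdd
    set E' := E ∩ Ici (c + δ) with hE'
    have hE'fin : volume E' ≠ ⊤ := by
      refine (lt_of_le_of_lt (measure_mono (fun y hy => hEs hy.1)) ?_).ne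
      simp [Real.volume_Icc]
    have hsplit : volume E ≤ ENNReal.ofReal δ + volume E' := by
      have hcover : E ⊆ Ico c (c + δ) ∪ E' := by
        intro y hy
        rcases lt_or_ge y (c + δ) with h | h
        · exact Or.inl ⟨csInf_le hbdd hy, h⟩
        · exact Or.inr ⟨hy, h⟩
      calc volume E ≤ volume (Ico c (c+δ) ∪ E') := measure_mono hcover
        _ ≤ volume (Ico c (c+δ)) + volume E' := measure_union_le _ _
        _ = ENNReal.ofReal δ + volume E' := by rw [Real.volume_Ico]; ring_nf
    have hm' : (n : ℝ) * δ < (volume E').toReal := by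
      have h1 : (volume E).toReal ≤ δ + (volume E').toReal := by
        have := ENNReal.toReal_mono (by
          simp [ENNReal.add_ne_top, hE'fin]) hsplit
        rwa [ENNReal.toReal_add (by simp) hE'fin, ENNReal.toReal_ofReal hδ.le] at this
      push_cast at hm
      linarith
    obtain ⟨y, hy1, hy2⟩ := IH E' a b (hE.inter isClosed_Ici) (fun z hz => hEs hz.1) δ hδ hm'
    refine ⟨Fin.cons c y, ?_, ?_⟩
    · intro i
      refine Fin.cases ?_ (fun j => ?_) i
      · simpa using hcE
      · simpa using (hy1 j).1
    · intro i
      refine Fin.cases ?_ (fun j => ?_) i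
      · have := (hy1 0).2
        simpa using this
      · have := hy2 j
        rw [← Fin.succ_castSucc]
        simpa using this


lemma chr_polyContDiff (p : ℝ[X]) {n : WithTop ℕ∞} : ContDiff ℝ n fun x : ℝ => p.eval x := by
  induction p using Polynomial.induction_on' with
  | add p q hp hq => simpa [eval_add] using hp.add hq
  | monomial k a =>
      simpa [eval_monomial] using (contDiff_const (c := a)).mul (contDiff_id.pow k)

lemma chr_polyIterWithin {s : Set ℝ} (hs : UniqueDiffOn ℝ s) :
    ∀ (n : ℕ) (p : ℝ[X]) (x : ℝ), x ∈ s →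
      iteratedDerivWithin n (fun t => p.eval t) s x = (derivative^[n] p).eval x := by
  intro n
  induction n with
  | zero => intro p x hx; simp
  | succ n IH =>
    intro p x hx
    rw [iteratedDerivWithin_succ']
    have hEq : Set.EqOn (derivWithin (fun t => p.eval t) s) (fun t => (derivative p).eval t) s := by
      intro y hy
      have : DifferentiableAt ℝ (fun t => p.eval t) y := p.differentiableAt
      rw [this.derivWithin (hs.uniqueDiffWithinAt hy), Polynomial.deriv]
    rw [iteratedDerivWithin_congr hEq hx, IH (derivative p) x hx,
      Function.iterate_succ_apply]

lemma chr_iterate_deriv_eq_C {p : ℝ[X]} {N : ℕ} (h : p.natDegree ≤ N) :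
    derivative^[N] p = C ((Nat.factorial N : ℝ) * p.coeff N) := by
  have hd : (derivative^[N] p).natDegree ≤ 0 := by
    have := p.natDegree_iterate_derivative N
    omega
  have h0 : derivative^[N] p = C ((derivative^[N] p).coeff 0) := eq_C_of_natDegree_le_zero hd
  rw [h0, Polynomial.coeff_iterate_derivative, zero_add, Nat.descFactorial_self, nsmul_eq_mul]

lemma chr_coeff_interpolate (N : ℕ) (x : Fin (N+1) → ℝ) (hx : Function.Injective x)
    (r : Fin (N+1) → ℝ) :
    (Lagrange.interpolate Finset.univ x r).coeff N =
      ∑ j, r j * ∏ i ∈ Finset.univ.erase j, (x j - x i)⁻¹ := by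
  rw [Lagrange.interpolate_apply, Polynomial.finset_sum_coeff]
  refine Finset.sum_congr rfl fun j _ => ?_
  have hb : Lagrange.basis Finset.univ x j
      = C (Lagrange.nodalWeight Finset.univ x j) * Lagrange.nodal (Finset.univ.erase j) x := by
    rw [Lagrange.basis_eq_prod_sub_inv_mul_nodal_div (Finset.mem_univ j),
      ← Lagrange.nodal_erase_eq_nodal_div (Finset.mem_univ j)]
  have hcard : (Finset.univ.erase j).card = N := by
    rw [Finset.card_erase_of_mem (Finset.mem_univ j)]
    simp
  have hmonic : (Lagrange.nodal (Finset.univ.erase j) x).Monic := Lagrange.nodal_monic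
  have hdeg : (Lagrange.nodal (Finset.univ.erase j) x).natDegree = N := by
    rw [Lagrange.natDegree_nodal, hcard]
  have hcoeff := hmonic.coeff_natDegree
  rw [hdeg] at hcoeff
  rw [hb, ← mul_assoc, ← C_mul, Polynomial.coeff_C_mul, hcoeff, mul_one,
    Lagrange.nodalWeight]


lemma chr_genRolle {a b : ℝ} (hab : a < b) :
    ∀ (m : ℕ) (g : ℝ → ℝ), ContDiffOn ℝ m g (Icc a b) →
    ∀ y : Fin (m+1) → ℝ, StrictMono y → (∀ i, y i ∈ Icc a b) → (∀ i, g (y i) = 0) →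
    ∃ ξ ∈ Icc a b, iteratedDerivWithin m g (Icc a b) ξ = 0 := by
  intro m
  induction m with
  | zero =>
    intro g _ y _ hym hz
    exact ⟨y 0, hym 0, by simpa using hz 0⟩
  | succ m IH =>
    intro g hg y hy hym hz
    have hud : UniqueDiffOn ℝ (Icc a b) := uniqueDiffOn_Icc hab
    have hcont : ContinuousOn g (Icc a b) := hg.continuousOn
    have hR : ∀ i : Fin (m+1), ∃ c ∈ Ioo (y i.castSucc) (y i.succ), deriv g c = 0 := by
      intro i
      exact exists_deriv_eq_zero (hy (show i.castSucc < i.succ from Fin.castSucc_lt_succ))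
        (hcont.mono (Icc_subset_Icc (hym i.castSucc).1 (hym i.succ).2))
        ((hz i.castSucc).trans (hz i.succ).symm)
    choose z hz1 hz2 using hR
    have hzIoo : ∀ i, z i ∈ Ioo a b := fun i =>
      ⟨lt_of_le_of_lt (hym i.castSucc).1 (hz1 i).1, lt_of_lt_of_le (hz1 i).2 (hym i.succ).2⟩
    set g' := derivWithin g (Icc a b) with hg'def
    have hg' : ContDiffOn ℝ m g' (Icc a b) := hg.derivWithin hud (by exact_mod_cast le_rfl)
    have hzmono : StrictMono z := by
      refine Fin.strictMono_iff_lt_succ.2 fun i => ?_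
      have h1 : z i.castSucc < y i.castSucc.succ := (hz1 i.castSucc).2
      have h2 : y i.succ.castSucc < z i.succ := (hz1 i.succ).1
      rw [Fin.succ_castSucc] at h1
      exact h1.trans_le (le_of_lt h2) |>.trans_le le_rfl
    have hzm : ∀ i, z i ∈ Icc a b := fun i => Ioo_subset_Icc_self (hzIoo i)
    have hz0 : ∀ i, g' (z i) = 0 := by
      intro i
      rw [hg'def, derivWithin_of_mem_nhds (Icc_mem_nhds (hzIoo i).1 (hzIoo i).2)]
      exact hz2 i
    obtain ⟨ξ, hξ, h0⟩ := IH g' hg' z hzmono hzm hz0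
    exact ⟨ξ, hξ, by rw [iteratedDerivWithin_succ']; exact h0⟩

lemma chr_dd_mvt {a b : ℝ} (hab : a < b) (N : ℕ) (f : ℝ → ℝ)
    (hf : ContDiffOn ℝ N f (Icc a b)) (x : Fin (N+1) → ℝ) (hx : StrictMono x)
    (hxm : ∀ i, x i ∈ Icc a b) :
    ∃ ξ ∈ Icc a b, iteratedDerivWithin N f (Icc a b) ξ =
      (Nat.factorial N : ℝ) * ∑ j, f (x j) * ∏ i ∈ Finset.univ.erase j, (x j - x i)⁻¹ := by
  have hud : UniqueDiffOn ℝ (Icc a b) := uniqueDiffOn_Icc hab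
  set p := Lagrange.interpolate Finset.univ x (fun i => f (x i)) with hp
  have hinjOn : Set.InjOn x ↑(Finset.univ : Finset (Fin (N+1))) := fun i _ j _ h => hx.injective h
  set q : ℝ → ℝ := fun t => p.eval t with hq
  have hqc : ContDiffOn ℝ N q (Icc a b) := (chr_polyContDiff p).contDiffOn
  have hg : ContDiffOn ℝ N (f - q) (Icc a b) := hf.sub hqc
  have hzero : ∀ i, (f - q) (x i) = 0 := by
    intro i
    have := Lagrange.eval_interpolate_at_node (r := fun i => f (x i)) hinjOn (Finset.mem_univ i)
    simp only [Pi.sub_apply, hq, ← hp]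
    rw [this]; ring
  obtain ⟨ξ, hξ, h0⟩ := chr_genRolle hab N (f - q) hg x hx hxm hzero
  have hsplit := iteratedDerivWithin_sub hξ hud (hf.contDiffWithinAt hξ) (hqc.contDiffWithinAt hξ)
  rw [hsplit] at h0
  have hdegp : p.natDegree ≤ N := by
    by_cases hp0 : p = 0
    · simp [hp0]
    · have := Lagrange.degree_interpolate_lt (r := fun i => f (x i)) hinjOn
      rw [← hp] at this
      have h2 : p.natDegree < N + 1 := by
        rw [Polynomial.natDegree_lt_iff_degree_lt hp0]
        simpa using this
      omega
  have hqval : iteratedDerivWithin N q (Icc a b) ξ =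
      (Nat.factorial N : ℝ) * ∑ j, f (x j) * ∏ i ∈ Finset.univ.erase j, (x j - x i)⁻¹ := by
    rw [hq, chr_polyIterWithin hud N p ξ hξ, chr_iterate_deriv_eq_C hdegp, eval_C,
      ← chr_coeff_interpolate N x hx.injective (fun i => f (x i)), hp]
  refine ⟨ξ, hξ, ?_⟩
  have : iteratedDerivWithin N f (Icc a b) ξ = iteratedDerivWithin N q (Icc a b) ξ := by
    linarith [h0]
  rw [this, hqval]

/-- sublevel set estimate, Christ: if `f ∈ C^N[a,b]` satisfies
`f^{(N)} ≥ μ > 0` on `[a,b]`, then `|{x ∈ [a,b] : |f x| ≤ γ}| ≤ A_N (γ/μ)^{1/N}`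
with `A_N` depending only on `N`. -/
theorem statement10 (N : ℕ) (hN : 1 ≤ N) :
    ∃ A : ℝ, 0 < A ∧
      ∀ (a b : ℝ), a ≤ b → ∀ (f : ℝ → ℝ) (μ : ℝ), 0 < μ →
        ContDiffOn ℝ N f (Icc a b) →
        (∀ x ∈ Icc a b, μ ≤ iteratedDerivWithin N f (Icc a b) x) →
        ∀ γ : ℝ, 0 < γ →
          volume {x ∈ Icc a b | |f x| ≤ γ} ≤ ENNReal.ofReal (A * (γ / μ) ^ ((1 : ℝ) / N)) := by
  classical
  refine ⟨(N : ℝ) * Nat.factorial (N + 1), by positivity, ?_⟩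
  intro a b hab f μ hμ hf hder γ hγ
  set E := {x ∈ Icc a b | |f x| ≤ γ} with hE
  have hEsub : E ⊆ Icc a b := fun y hy => hy.1
  rcases eq_or_lt_of_le hab with rfl | hab'
  · have : volume E ≤ volume (Icc a a) := measure_mono hEsub
    simp only [Set.Icc_self, Real.volume_singleton] at this
    exact le_trans (le_of_le_of_eq this rfl) (by simp)
  -- E is closed
  have hEclosed : IsClosed E := by
    have : E = Icc a b ∩ f ⁻¹' (Icc (-γ) γ) := by
      ext y; simp [hE, abs_le, and_assoc]
    rw [this]
    exact hf.continuousOn.preimage_isClosed_of_isClosed isClosed_Icc isClosed_Icc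
  have hEfin : volume E ≠ ⊤ := by
    refine (lt_of_le_of_lt (measure_mono hEsub) ?_).ne
    simp [Real.volume_Icc]
  have hNpos : (0:ℝ) < N := by exact_mod_cast hN
  -- the constant B
  set C : ℝ := (Nat.factorial (N + 1) : ℝ) * (γ / μ) with hC
  have hCpos : 0 < C := by positivity
  set B : ℝ := C ^ ((1:ℝ)/N) with hB
  have hBpos : 0 < B := Real.rpow_pos_of_pos hCpos _
  -- key: toReal ≤ N * B
  have key : (volume E).toReal ≤ N * B := by
    by_contra hcon
    push_neg at hcon
    set δ : ℝ := (B + (volume E).toReal / N) / 2 with hδdef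
    have hBlt : B < (volume E).toReal / N := by
      rw [lt_div_iff₀ hNpos]; linarith [hcon]
    have hδB : B < δ := by rw [hδdef]; linarith
    have hδpos : 0 < δ := hBpos.trans hδB
    have hδm : (N : ℝ) * δ < (volume E).toReal := by
      have : δ < (volume E).toReal / N := by rw [hδdef]; linarith
      calc (N:ℝ) * δ < N * ((volume E).toReal / N) := by
            exact mul_lt_mul_of_pos_left this hNpos
        _ = (volume E).toReal := by field_simp
    obtain ⟨x, hxE, hxgap⟩ := chr_select N E a b hEclosed hEsub δ hδpos hδm
    obtain ⟨hxmono, hxpairs⟩ := chr_pairs hδpos x hxgap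
    obtain ⟨ξ, hξ, heq⟩ := chr_dd_mvt hab' N f hf x hxmono (fun i => (hxE i).1)
    have hμle := hder ξ hξ
    rw [heq] at hμle
    -- bound the sum
    have hterm : ∀ j : Fin (N+1), f (x j) * ∏ i ∈ Finset.univ.erase j, (x j - x i)⁻¹
        ≤ γ * (δ ^ (N))⁻¹ := by
      intro j
      have habs : |f (x j) * ∏ i ∈ Finset.univ.erase j, (x j - x i)⁻¹|
          ≤ γ * (δ ^ (N))⁻¹ := by
        rw [abs_mul]
        have h1 : |f (x j)| ≤ γ := (hxE j).2
        have h2 : |∏ i ∈ Finset.univ.erase j, (x j - x i)⁻¹| ≤ (δ ^ (N))⁻¹ := by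
          rw [Finset.abs_prod]
          have hcard : (Finset.univ.erase j).card = N := by
            rw [Finset.card_erase_of_mem (Finset.mem_univ j)]
            simp
          have hprodle : ∏ i ∈ Finset.univ.erase j, |(x j - x i)⁻¹|
              ≤ ∏ _i ∈ Finset.univ.erase j, δ⁻¹ := by
            refine Finset.prod_le_prod (fun i _ => abs_nonneg _) ?_
            intro i hi
            have hij : i ≠ j := Finset.ne_of_mem_erase hi
            have hge : δ ≤ |x j - x i| := by
              rcases lt_or_gt_of_ne hij with h | h
              · have := hxpairs i j h
                rw [abs_of_nonneg (by linarith)]; linarith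
              · have := hxpairs j i h
                rw [abs_of_nonpos (by linarith)]; linarith
            rw [abs_inv]
            exact inv_anti₀ hδpos hge
          calc ∏ i ∈ Finset.univ.erase j, |(x j - x i)⁻¹|
              ≤ ∏ _i ∈ Finset.univ.erase j, δ⁻¹ := hprodle
            _ = (δ⁻¹) ^ N := by rw [Finset.prod_const, hcard]
            _ = (δ ^ (N))⁻¹ := by rw [inv_pow]
        exact mul_le_mul h1 h2 (abs_nonneg _) hγ.le
      exact (le_abs_self _).trans habs
    have hsum : ∑ j, f (x j) * ∏ i ∈ Finset.univ.erase j, (x j - x i)⁻¹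
        ≤ (N+1) * (γ * (δ ^ (N))⁻¹) := by
      calc ∑ j, f (x j) * ∏ i ∈ Finset.univ.erase j, (x j - x i)⁻¹
          ≤ ∑ _j : Fin (N+1), γ * (δ ^ (N))⁻¹ := Finset.sum_le_sum (fun j _ => hterm j)
        _ = (N+1) * (γ * (δ ^ N)⁻¹) := by
            rw [Finset.sum_const, Finset.card_univ, Fintype.card_fin]
            push_cast
            ring
    -- so μ ≤ (N'+2)! γ / δ^(N)
    have hfact : (Nat.factorial (N) : ℝ) * ((N+1) * (γ * (δ ^ (N))⁻¹))
        = (Nat.factorial (N+1) : ℝ) * γ * (δ ^ (N))⁻¹ := by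
      rw [Nat.factorial_succ (N)]
      push_cast
      ring
    have hμ2 : μ ≤ (Nat.factorial (N+1) : ℝ) * γ * (δ ^ (N))⁻¹ := by
      rw [← hfact]
      calc μ ≤ (Nat.factorial (N) : ℝ)
            * ∑ j, f (x j) * ∏ i ∈ Finset.univ.erase j, (x j - x i)⁻¹ := hμle
        _ ≤ _ := by
            apply mul_le_mul_of_nonneg_left hsum (by positivity)
    have hδpow : δ ^ N ≤ C := by
      have hδpowpos : (0:ℝ) < δ ^ N := by positivity
      have h3 : μ * δ ^ N ≤ (Nat.factorial (N+1) : ℝ) * γ := by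
        have h4 := mul_le_mul_of_nonneg_right hμ2 (le_of_lt hδpowpos)
        rwa [mul_assoc, inv_mul_cancel₀ hδpowpos.ne', mul_one] at h4
      have h5 : δ ^ N ≤ ((Nat.factorial (N+1) : ℝ) * γ) / μ :=
        (le_div_iff₀ hμ).mpr (by linarith)
      rw [hC, mul_div_assoc] at *
      linarith
    have hBpow : B ^ (N) = C := by
      rw [hB, ← Real.rpow_natCast (C ^ ((1:ℝ)/(N:ℕ))) (N), ← Real.rpow_mul hCpos.le]
      push_cast
      rw [one_div, inv_mul_cancel₀ (by positivity)]
      exact Real.rpow_one C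
    have : δ ^ (N) ≤ B ^ (N) := by rw [hBpow]; exact hδpow
    have hcontra : B ^ N < δ ^ N :=
      pow_lt_pow_left₀ hδB hBpos.le (by omega)
    linarith
  -- conclude
  have hBle : B ≤ (Nat.factorial (N+1) : ℝ) * (γ/μ) ^ ((1:ℝ)/N) := by
    rw [hB, hC, Real.mul_rpow (by positivity) (by positivity)]
    apply mul_le_mul_of_nonneg_right _ (by positivity)
    have h1 : (1:ℝ) ≤ (Nat.factorial (N+1) : ℝ) := by
      exact_mod_cast Nat.one_le_iff_ne_zero.mpr (Nat.factorial_ne_zero _)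
    calc (Nat.factorial (N+1) : ℝ) ^ ((1:ℝ)/N)
        ≤ (Nat.factorial (N+1) : ℝ) ^ (1:ℝ) := by
          apply Real.rpow_le_rpow_of_exponent_le h1
          rw [div_le_one hNpos]; exact_mod_cast hN
      _ = _ := Real.rpow_one _
  calc volume E = ENNReal.ofReal ((volume E).toReal) := (ENNReal.ofReal_toReal hEfin).symm
    _ ≤ ENNReal.ofReal ((N:ℝ) * Nat.factorial (N+1) * (γ/μ) ^ ((1:ℝ)/N)) := by
        apply ENNReal.ofReal_le_ofReal
        calc (volume E).toReal ≤ N * B := key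
          _ ≤ (N:ℝ) * ((Nat.factorial (N+1) : ℝ) * (γ/μ) ^ ((1:ℝ)/N)) :=
              mul_le_mul_of_nonneg_left hBle (by positivity)
          _ = _ := by ring
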